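/- (Chai–Oort) Let K be a number field of degree n = [K : ℚ] and let L be a quadratic extension of K (inside a fixed algebraic closure of ℚ). Let L^c denote the Galois closure of L/ℚ. Then the Galois group Gal(L^c/ℚ) is isomorphic to a subgroup of the wreath product C₂ ≀_Ω S_n, where Ω = {1, 2, ..., n}, C₂ = ℤ/2ℤ, and the symmetric group S_n acts on Ω (equivalently, on C₂^Ω) by permuting components. That is, there is an injective group homomorphism Gal(L^c/ℚ) → (Ω → ℤ/2ℤ) ⋊_θ S_n, where (θ_π f)(i) = f(π⁻¹(i)). -/

import Mathlib

/-- The homomorphism `θ : H → Aut(Ω → K)` given by `(θ_h f)(ω) = f (h⁻¹ • ω)`. -/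
def wreathTheta (K : Type*) {H Ω : Type*} [Group K] [Group H] [MulAction H Ω] :
    H →* MulAut (Ω → K) where
  toFun h :=
    { toFun := fun f ω => f (h⁻¹ • ω)
      invFun := fun f ω => f (h • ω)
      left_inv := fun f => funext fun ω => by simp
      right_inv := fun f => funext fun ω => by simp
      map_mul' := fun f g => rfl }
  map_one' := by ext f ω; simp
  map_mul' := fun h₁ h₂ => by ext f ω; simp [mul_smul]

/-- The wreath product `K ≀_Ω H := (Ω → K) ⋊_θ H`. -/
abbrev WreathProduct (K Ω H : Type*) [Group K] [Group H] [MulAction H Ω] : Type _ :=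
  SemidirectProduct (Ω → K) H (wreathTheta K)

set_option maxHeartbeats 1000000
set_option synthInstance.maxHeartbeats 400000

/-- Auxiliary group-theoretic fact: a group acting faithfully and fiber-preservingly on
`Fin n × ZMod 2` embeds into the wreath product `C₂ ≀ Sₙ`. -/
theorem wreath_embed_aux {G : Type*} [Group G] (n : ℕ)
    (ρ : G →* Equiv.Perm (Fin n × ZMod 2)) (hinj : Function.Injective ρ)
    (hfib : ∀ (g : G) (x y : Fin n × ZMod 2), x.1 = y.1 → (ρ g x).1 = (ρ g y).1) :
    ∃ φ : G →* WreathProduct (Multiplicative (ZMod 2)) (Fin n) (Equiv.Perm (Fin n)),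
      Function.Injective φ := by
  classical
  -- the induced permutation on the base
  have hcomp : ∀ (g₁ g₂ : G) (i : Fin n),
      (ρ (g₁ * g₂) (i, 0)).1 = (ρ g₁ ((ρ g₂ (i, 0)).1, 0)).1 := by
    intro g₁ g₂ i
    rw [map_mul, Equiv.Perm.mul_apply]
    exact hfib g₁ _ _ rfl
  have hone : ∀ i : Fin n, (ρ 1 (i, 0)).1 = i := by
    intro i; rw [map_one]; rfl
  let π : G →* Equiv.Perm (Fin n) :=
    { toFun := fun g =>
        { toFun := fun i => (ρ g (i, 0)).1
          invFun := fun i => (ρ g⁻¹ (i, 0)).1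
          left_inv := fun i => by
            show ((ρ g⁻¹) (((ρ g) (i, 0)).1, 0)).1 = i
            rw [← hcomp g⁻¹ g i, inv_mul_cancel, hone]
          right_inv := fun i => by
            show ((ρ g) (((ρ g⁻¹) (i, 0)).1, 0)).1 = i
            rw [← hcomp g g⁻¹ i, mul_inv_cancel, hone] }
      map_one' := Equiv.ext fun i => hone i
      map_mul' := fun g₁ g₂ => Equiv.ext fun i => hcomp g₁ g₂ i }
  -- translation structure on the fibers
  have hZ : ∀ a b : ZMod 2, a ≠ b → a = b + 1 := by decide
  have hZ01 : ∀ x : ZMod 2, x = 0 ∨ x = 1 := by decide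
  have htrans : ∀ (g : G) (j : Fin n) (x : ZMod 2),
      (ρ g (j, x)).2 = (ρ g (j, 0)).2 + x := by
    intro g j x
    rcases hZ01 x with h | h
    · subst h; simp
    · subst h
      have hne : ρ g (j, 1) ≠ ρ g (j, 0) := fun h => by
        have := (ρ g).injective h
        simpa using congrArg Prod.snd this
      have hfst : (ρ g (j, 1)).1 = (ρ g (j, 0)).1 := hfib g _ _ rfl
      have hsnd : (ρ g (j, 1)).2 ≠ (ρ g (j, 0)).2 := by
        intro h
        exact hne (Prod.ext hfst h)
      exact hZ _ _ hsnd
  -- the fiber components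
  let f : G → Fin n → Multiplicative (ZMod 2) := fun g i =>
    Multiplicative.ofAdd ((ρ g ((π g).symm i, 0)).2)
  have hfval : ∀ (g : G) (j : Fin n), (ρ g (j, 0)).2 = (f g ((π g) j)).toAdd := by
    intro g j
    simp only [f]
    rw [Equiv.symm_apply_apply]
    rfl
  refine ⟨{ toFun := fun g => ⟨f g, π g⟩
            map_one' := ?_
            map_mul' := ?_ }, ?_⟩
  · have h1 : f 1 = 1 := by
      funext i
      simp only [f, map_one]
      rfl
    have h2 : π 1 = 1 := map_one π
    show (⟨f 1, π 1⟩ : SemidirectProduct _ _ _) = 1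
    rw [h1, h2]
    rfl
  · intro g₁ g₂
    have hright : π (g₁ * g₂) = π g₁ * π g₂ := map_mul π g₁ g₂
    refine SemidirectProduct.ext ?_ hright
    funext i
    · -- left components
      show f (g₁ * g₂) i = (f g₁ * (wreathTheta (Multiplicative (ZMod 2)) (π g₁)) (f g₂)) i
      have hk : (π (g₁ * g₂)).symm i = (π g₂).symm ((π g₁).symm i) := by
        rw [hright]; rfl
      have step1 : ρ (g₁ * g₂) ((π (g₁ * g₂)).symm i, 0)
          = ρ g₁ (ρ g₂ ((π g₂).symm ((π g₁).symm i), 0)) := by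
        rw [hk, map_mul, Equiv.Perm.mul_apply]
      have hfst2 : (ρ g₂ ((π g₂).symm ((π g₁).symm i), 0)).1 = (π g₁).symm i := by
        show (π g₂) ((π g₂).symm ((π g₁).symm i)) = _
        rw [Equiv.apply_symm_apply]
      have hprod : ρ g₂ ((π g₂).symm ((π g₁).symm i), 0)
          = ((π g₁).symm i, (f g₂ ((π g₁).symm i)).toAdd) := by
        refine Prod.ext hfst2 ?_
        simp only [f]
        rfl
      have hstep2 : (ρ (g₁ * g₂) ((π (g₁ * g₂)).symm i, 0)).2
          = (ρ g₁ ((π g₁).symm i, 0)).2 + (f g₂ ((π g₁).symm i)).toAdd := by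
        rw [step1, hprod, htrans]
      simp only [f]
      rw [hstep2]
      have hfg1 : (ρ g₁ ((π g₁).symm i, 0)).2 = (f g₁ i).toAdd := by
        simp only [f]; rfl
      rw [hfg1]
      rfl
  · rw [injective_iff_map_eq_one]
    intro g hg
    have hleft : f g = 1 := congrArg SemidirectProduct.left hg
    have hright : π g = 1 := congrArg SemidirectProduct.right hg
    have hfix : ∀ x, ρ g x = x := by
      intro x
      refine Prod.ext ?_ ?_
      · have h1 : (ρ g x).1 = (ρ g (x.1, 0)).1 := hfib g _ _ rfl
        have h2 : (ρ g (x.1, 0)).1 = (π g) x.1 := rfl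
        rw [h1, h2, hright]; rfl
      · have h2 : (ρ g x).2 = (ρ g (x.1, 0)).2 + x.2 := htrans g x.1 x.2
        rw [h2, hfval, hleft]
        simp
    exact hinj (by rw [map_one]; exact Equiv.ext hfix)

/-- Transport `FiniteDimensional ℚ M` across the (unique) `ℚ`-module structures. -/
theorem chaiOort_fd_congr {M : Type*} [AddCommGroup M] {m₁ m₂ : Module ℚ M}
    (h : @FiniteDimensional ℚ M _ _ m₁) : @FiniteDimensional ℚ M _ _ m₂ := by
  obtain rfl : m₁ = m₂ := Subsingleton.elim _ _
  exact h

/-- Transport `finrank` across the (unique) `ℚ`-module structures. -/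
theorem chaiOort_finrank_congr {M : Type*} [AddCommGroup M] {m₁ m₂ : Module ℚ M} :
    @Module.finrank ℚ M _ _ m₁ = @Module.finrank ℚ M _ _ m₂ := by
  obtain rfl : m₁ = m₂ := Subsingleton.elim _ _
  rfl

section Helpers

variable {Qbar' : Type*} [Field Qbar'] [Algebra ℚ Qbar']

/-- The inclusion of intermediate fields of a `ℚ`-algebra, elaborated with default
`ℚ`-algebra instances (avoiding instance diamonds). -/
noncomputable def chaiOortIncl {K L : IntermediateField ℚ Qbar'} (hKL : K ≤ L) :
    ↥K →ₐ[ℚ] ↥L where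
  toFun x := ⟨x.1, hKL x.2⟩
  map_one' := rfl
  map_mul' _ _ := rfl
  map_zero' := rfl
  map_add' _ _ := rfl
  commutes' q := by apply Subtype.ext; simp

/-- The valuation of an intermediate field, with default instances. -/
noncomputable def chaiOortVal (S : IntermediateField ℚ Qbar') : ↥S →ₐ[ℚ] Qbar' where
  toFun := Subtype.val
  map_one' := rfl
  map_mul' _ _ := rfl
  map_zero' := rfl
  map_add' _ _ := rfl
  commutes' q := by simp

/-- Restriction of the codomain of an algebra hom to an intermediate field,
with default instances. -/
noncomputable def chaiOortRes {A : Type*} [Semiring A] [Algebra ℚ A]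
    {S : IntermediateField ℚ Qbar'} (f : A →ₐ[ℚ] Qbar') (h : ∀ x, f x ∈ S) :
    A →ₐ[ℚ] ↥S where
  toFun x := ⟨f x, h x⟩
  map_one' := Subtype.ext (map_one f)
  map_mul' x y := Subtype.ext (map_mul f x y)
  map_zero' := Subtype.ext (map_zero f)
  map_add' x y := Subtype.ext (map_add f x y)
  commutes' q := Subtype.ext (by simpa using f.commutes q)

/-- A type synonym used to carry a nonstandard algebra structure. -/
def ChaiOortQ (Q : Type*) : Type _ := Q

end Helpers

open IntermediateField Module in
/-- **Chai–Oort.** Let `K` be a number field of degree `n = [K : ℚ]` and let `L`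
be a quadratic extension of `K` inside a fixed algebraic closure `Qbar` of `ℚ`.  Let `L^c`
denote the Galois closure of `L/ℚ`.  Then `Gal(L^c/ℚ)` is isomorphic to a subgroup of the
wreath product `C₂ ≀_Ω S_n`, where `Ω = {1, …, n}` and `S_n` acts by permuting components:
there is an injective group homomorphism
`Gal(L^c/ℚ) → (Fin n → ℤ/2ℤ) ⋊_θ S_n` with `(θ_π f)(i) = f(π⁻¹ i)`. -/
theorem chai_oort {Qbar : Type*} [Field Qbar] [Algebra ℚ Qbar] [IsAlgClosure ℚ Qbar]
    (K L : IntermediateField ℚ Qbar) (hKL : K ≤ L) (n : ℕ)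
    [FiniteDimensional ℚ ↥L]
    (hdegK : Module.finrank ℚ ↥K = n)
    (hquad : IntermediateField.relfinrank K L = 2) :
    ∃ φ : (↥(normalClosure ℚ ↥L Qbar) ≃ₐ[ℚ] ↥(normalClosure ℚ ↥L Qbar)) →*
        WreathProduct (Multiplicative (ZMod 2)) (Fin n) (Equiv.Perm (Fin n)),
      Function.Injective φ := by
  classical
  haveI : IsAlgClosed Qbar := IsAlgClosure.isAlgClosed ℚ
  set incl : ↥K →ₐ[ℚ] ↥L := chaiOortIncl hKL with hincl
  letI : Algebra ↥K ↥L := RingHom.toAlgebra incl.toRingHom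
  haveI hfdKL : FiniteDimensional ↥K ↥L :=
    @Module.Finite.of_restrictScalars_finite ℚ ↥K ↥L _ _ _ Algebra.toModule _ Algebra.toSMul
      (IsScalarTower.of_algebraMap_eq fun x => (incl.commutes x).symm) (chaiOort_fd_congr ‹_›)
  haveI : CharZero ↥K := charZero_of_injective_algebraMap (algebraMap ℚ ↥K).injective
  haveI : FiniteDimensional ℚ ↥K := chaiOort_fd_congr (@FiniteDimensional.of_injective ℚ ↥K _ _ Algebra.toModule ↥L _ Algebra.toModule
    ((incl.restrictScalars ℚ).toLinearMap) incl.toRingHom.injective (chaiOort_fd_congr ‹_›))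
  have hn0 : 0 < n := hdegK ▸ finrank_pos
  -- rank of L over K is 2
  have hrank2 : finrank ↥K ↥L = 2 := by
    have h1 : finrank ℚ ↥K * relfinrank K L = finrank ℚ ↥L :=
      IntermediateField.finrank_bot_mul_relfinrank hKL
    have h2 : finrank ℚ ↥K * finrank ↥K ↥L = finrank ℚ ↥L :=
      @Module.finrank_mul_finrank ℚ ↥K ↥L _ _ _ _ _ _ (@IsScalarTower.mk ℚ ↥K ↥L (_) (_) (_) fun q x y => by
        apply Subtype.ext
        simp only [Algebra.smul_def, RingHom.algebraMap_toAlgebra]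
        simp [Rat.smul_def, mul_assoc, hincl, chaiOortIncl]) _ _ _ _
    have h3 := h2.trans h1.symm
    rw [hquad] at h3
    have hK0 : 0 < finrank ℚ ↥K := finrank_pos
    exact Nat.eq_of_mul_eq_mul_left hK0 h3
  have hLrank : finrank ℚ ↥L = n * 2 := by
    have h1 : finrank ℚ ↥K * relfinrank K L = finrank ℚ ↥L :=
      IntermediateField.finrank_bot_mul_relfinrank hKL
    rw [hquad, hdegK] at h1
    exact h1.symm
  set Lc := normalClosure ℚ ↥L Qbar with hLcdef
  -- Fintype instances, in the default-instances flavor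
  letI : Fintype (↥L →ₐ[ℚ] ↥Lc) := by
    refine @minpoly.AlgHom.fintype ℚ ↥L ↥Lc _ _ _ _ _ _ ?_
    exact chaiOort_fd_congr ‹FiniteDimensional ℚ ↥L›
  letI : Fintype (↥L →ₐ[ℚ] Qbar) := by
    refine @minpoly.AlgHom.fintype ℚ ↥L Qbar _ _ _ _ _ _ ?_
    exact chaiOort_fd_congr ‹FiniteDimensional ℚ ↥L›
  letI : Fintype (↥K →ₐ[ℚ] ↥Lc) := by
    refine @minpoly.AlgHom.fintype ℚ ↥K ↥Lc _ _ _ _ _ _ ?_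
    exact chaiOort_fd_congr ‹FiniteDimensional ℚ ↥K›
  haveI : @FiniteDimensional ℚ ↥L _ _ Algebra.toModule :=
    chaiOort_fd_congr ‹FiniteDimensional ℚ ↥L›
  -- cardinality of the set of embeddings of L into Lc
  have hcardE : Fintype.card (↥L →ₐ[ℚ] ↥Lc) = n * 2 := by
    let eqvE : (↥L →ₐ[ℚ] ↥Lc) ≃ (↥L →ₐ[ℚ] Qbar) :=
      { toFun := (chaiOortVal Lc).comp
        invFun := fun f => chaiOortRes f
          (fun x => AlgHom.fieldRange_le_normalClosure f ⟨x, rfl⟩)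
        left_inv := fun σ => AlgHom.ext fun x => Subtype.ext rfl
        right_inv := fun f => AlgHom.ext fun x => rfl }
    rw [Fintype.card_congr eqvE, AlgHom.card]
    exact chaiOort_finrank_congr.trans hLrank
  -- each fiber of the restriction map has exactly two elements
  have hfiber : ∀ τ : ↥K →ₐ[ℚ] ↥Lc,
      Fintype.card {σ : ↥L →ₐ[ℚ] ↥Lc // σ.comp incl = τ} = 2 := by
    intro τ
    letI : Field (ChaiOortQ Qbar) := inferInstanceAs (Field Qbar)
    letI : Algebra ℚ (ChaiOortQ Qbar) := ‹Algebra ℚ Qbar›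
    haveI : IsAlgClosed (ChaiOortQ Qbar) := inferInstanceAs (IsAlgClosed Qbar)
    letI : Algebra ↥K (ChaiOortQ Qbar) :=
      RingHom.toAlgebra ((chaiOortVal Lc).comp τ).toRingHom
    haveI := IsScalarTower.of_algebraMap_eq (R := ℚ) (S := ↥K) (A := ChaiOortQ Qbar)
      fun x => (((chaiOortVal Lc).comp τ).commutes x).symm
    let e2 : {σ : ↥L →ₐ[ℚ] ↥Lc // σ.comp incl = τ} ≃ (↥L →ₐ[↥K] ChaiOortQ Qbar) :=
      { toFun := fun σ =>
          { toRingHom := ((chaiOortVal Lc).comp σ.1).toRingHom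
            commutes' := fun k => congrArg (chaiOortVal Lc) (AlgHom.congr_fun σ.2 k) }
        invFun := fun ψ =>
          ⟨chaiOortRes (Qbar' := Qbar) (ψ.restrictScalars ℚ)
              (fun x => AlgHom.fieldRange_le_normalClosure (ψ.restrictScalars ℚ) ⟨x, rfl⟩),
            by
              apply AlgHom.ext
              intro k
              apply Subtype.ext
              exact ψ.commutes k⟩
        left_inv := fun σ => Subtype.ext (AlgHom.ext fun x => Subtype.ext rfl)
        right_inv := fun ψ => AlgHom.ext fun x => rfl }
    rw [Fintype.card_congr e2, AlgHom.card, hrank2]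
  -- cardinality of the base
  have hcardF : Fintype.card (↥K →ₐ[ℚ] ↥Lc) = n := by
    have hsig : Fintype.card (↥L →ₐ[ℚ] ↥Lc)
        = Fintype.card (↥K →ₐ[ℚ] ↥Lc) * 2 := by
      rw [Fintype.card_congr
        (Equiv.sigmaFiberEquiv (fun σ : ↥L →ₐ[ℚ] ↥Lc => σ.comp incl)).symm]
      rw [Fintype.card_sigma]
      simp [hfiber]
    rw [hcardE] at hsig
    omega
  -- the action of the Galois group on embeddings of L into Lc
  let a : (↥Lc ≃ₐ[ℚ] ↥Lc) →* Equiv.Perm (↥L →ₐ[ℚ] ↥Lc) :=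
    { toFun := fun g =>
        { toFun := fun σ => g.toAlgHom.comp σ
          invFun := fun σ => g.symm.toAlgHom.comp σ
          left_inv := fun σ => AlgHom.ext fun x => g.symm_apply_apply (σ x)
          right_inv := fun σ => AlgHom.ext fun x => g.apply_symm_apply (σ x) }
      map_one' := Equiv.ext fun σ => AlgHom.ext fun x => rfl
      map_mul' := fun g₁ g₂ => Equiv.ext fun σ => AlgHom.ext fun x => rfl }
  -- the action on embeddings of K into Lc
  let b : (↥Lc ≃ₐ[ℚ] ↥Lc) →* Equiv.Perm (↥K →ₐ[ℚ] ↥Lc) :=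
    { toFun := fun g =>
        { toFun := fun τ => g.toAlgHom.comp τ
          invFun := fun τ => g.symm.toAlgHom.comp τ
          left_inv := fun τ => AlgHom.ext fun x => g.symm_apply_apply (τ x)
          right_inv := fun τ => AlgHom.ext fun x => g.apply_symm_apply (τ x) }
      map_one' := Equiv.ext fun τ => AlgHom.ext fun x => rfl
      map_mul' := fun g₁ g₂ => Equiv.ext fun τ => AlgHom.ext fun x => rfl }
  let p : (↥L →ₐ[ℚ] ↥Lc) → (↥K →ₐ[ℚ] ↥Lc) := fun σ => σ.comp incl
  have hab : ∀ (g : ↥Lc ≃ₐ[ℚ] ↥Lc) (σ : ↥L →ₐ[ℚ] ↥Lc),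
      p (a g σ) = b g (p σ) := fun g σ => AlgHom.ext fun x => rfl
  -- faithfulness of the action on embeddings of L
  have ha_inj : Function.Injective a := by
    rw [injective_iff_map_eq_one]
    intro g hg
    have hfixhom : ∀ σ : ↥L →ₐ[ℚ] ↥Lc, g.toAlgHom.comp σ = σ := by
      intro σ
      have := congrArg (fun (e : Equiv.Perm (↥L →ₐ[ℚ] ↥Lc)) => e σ) hg
      exact this
    -- the equalizer of `val ∘ g` and `val`
    let A : ↥Lc →ₐ[ℚ] Qbar := (chaiOortVal Lc).comp g.toAlgHom
    let B : ↥Lc →ₐ[ℚ] Qbar := chaiOortVal Lc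
    let EqS : Subalgebra ℚ ↥Lc := AlgHom.equalizer A B
    have hEqInv : ∀ x ∈ EqS, x⁻¹ ∈ EqS := by
      intro x hx
      have hx' : A x = B x := hx
      show A x⁻¹ = B x⁻¹
      rw [map_inv₀, map_inv₀, hx']
    let EqF : IntermediateField ℚ ↥Lc := EqS.toIntermediateField hEqInv
    have hle : Lc ≤ IntermediateField.map (chaiOortVal Lc) EqF := by
      show normalClosure ℚ ↥L Qbar ≤ _
      rw [normalClosure_le_iff]
      intro fσ
      rintro y ⟨z, rfl⟩
      have hmem : chaiOortRes fσ
          (fun x => AlgHom.fieldRange_le_normalClosure fσ ⟨x, rfl⟩) z ∈ EqF := by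
        show A _ = B _
        have h2 := AlgHom.congr_fun (hfixhom (chaiOortRes fσ
          (fun x => AlgHom.fieldRange_le_normalClosure fσ ⟨x, rfl⟩))) z
        exact congrArg (chaiOortVal Lc) h2
      exact ⟨_, hmem, rfl⟩
    have hfixall : ∀ x : ↥Lc, g x = x := by
      intro x
      have hx : (x : Qbar) ∈ IntermediateField.map (chaiOortVal Lc) EqF := hle x.2
      obtain ⟨y, hy, hval⟩ := hx
      have hyx : y = x := Subtype.ext hval
      rw [hyx] at hy
      have : A x = B x := hy
      exact Subtype.ext this
    exact AlgEquiv.ext hfixall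
  -- assemble the identification of embeddings of L with (Fin n) × ZMod 2
  let eqF : (↥K →ₐ[ℚ] ↥Lc) ≃ Fin n := Fintype.equivFinOfCardEq hcardF
  let fibEq : ∀ τ : ↥K →ₐ[ℚ] ↥Lc, {σ // p σ = τ} ≃ ZMod 2 := fun τ =>
    Fintype.equivOfCardEq (by rw [hfiber τ]; rfl)
  let e : (↥L →ₐ[ℚ] ↥Lc) ≃ Fin n × ZMod 2 :=
    ((Equiv.sigmaFiberEquiv p).symm.trans
      (Equiv.sigmaCongrRight fibEq)).trans
      ((Equiv.sigmaEquivProd _ _).trans (Equiv.prodCongr eqF (Equiv.refl _)))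
  have he1 : ∀ σ, (e σ).1 = eqF (p σ) := fun σ => rfl
  have he2 : ∀ y : Fin n × ZMod 2, p (e.symm y) = eqF.symm y.1 := by
    intro y
    have h := he1 (e.symm y)
    rw [Equiv.apply_symm_apply] at h
    exact (Equiv.eq_symm_apply eqF).mpr h.symm
  -- the permutation action on Fin n × ZMod 2
  let ρ : (↥Lc ≃ₐ[ℚ] ↥Lc) →* Equiv.Perm (Fin n × ZMod 2) :=
    { toFun := fun g => (e.symm.trans (a g)).trans e
      map_one' := by
        apply Equiv.ext
        intro x
        show e (a 1 (e.symm x)) = x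
        rw [map_one]
        show e (e.symm x) = x
        rw [Equiv.apply_symm_apply]
      map_mul' := by
        intro g₁ g₂
        apply Equiv.ext
        intro x
        show e (a (g₁ * g₂) (e.symm x)) = e (a g₁ (e.symm (e (a g₂ (e.symm x)))))
        rw [Equiv.symm_apply_apply, map_mul]
        rfl }
  have hρinj : Function.Injective ρ := by
    intro g₁ g₂ h
    apply ha_inj
    apply Equiv.ext
    intro σ
    have h2 : e.symm (ρ g₁ (e σ)) = e.symm (ρ g₂ (e σ)) := by rw [h]
    have h3 : ∀ g : ↥Lc ≃ₐ[ℚ] ↥Lc, e.symm (ρ g (e σ)) = a g σ := fun g => by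
      show e.symm (e (a g (e.symm (e σ)))) = a g σ
      rw [Equiv.symm_apply_apply, Equiv.symm_apply_apply]
    rw [h3 g₁, h3 g₂] at h2
    exact h2
  have hρfib : ∀ (g : ↥Lc ≃ₐ[ℚ] ↥Lc) (x y : Fin n × ZMod 2),
      x.1 = y.1 → (ρ g x).1 = (ρ g y).1 := by
    intro g x y hxy
    have hx : (ρ g x).1 = eqF (b g (eqF.symm x.1)) := by
      show (e (a g (e.symm x))).1 = _
      rw [he1, hab, he2]
    have hy : (ρ g y).1 = eqF (b g (eqF.symm y.1)) := by
      show (e (a g (e.symm y))).1 = _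
      rw [he1, hab, he2]
    rw [hx, hy, hxy]
  exact wreath_embed_aux n ρ hρinj hρfib
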